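/- Let h(m⃗) denote the minimum of Σ_{v hybrid} (indeg(v) − 1) over all phylogenetic networks realizing a ploidy profile m⃗ = (m₁,…,mₙ). Then h(m⃗) ≤ Σ_{k=1}^{n} (⌊log₂ m_k⌋ + s₂(m_k) − 1), where s₂ denotes binary digit-sum and terms with m_k = 1 contribute 0. -/

import Mathlib

/-- A directed path in a multidigraph with arc multiplicities `arcs`. -/
inductive PathIn (V : Type) (arcs : V → V → ℕ) : V → V → Type
  | nil (v : V) : PathIn V arcs v v
  | cons {u v w : V} (e : Fin (arcs u v)) (p : PathIn V arcs v w) : PathIn V arcs u w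

/-- A finite rooted directed acyclic multigraph (parallel arcs allowed, no loops by acyclicity);
the field `rank` witnesses acyclicity via a topological order. -/
structure PhyloNet where
  V : Type
  fin : Fintype V
  root : V
  arcs : V → V → ℕ
  rank : V → ℕ
  rank_lt : ∀ u v : V, 0 < arcs u v → rank u < rank v

attribute [instance] PhyloNet.fin

namespace PhyloNet

def indeg (N : PhyloNet) (v : N.V) : ℕ := ∑ u : N.V, N.arcs u v

def outdeg (N : PhyloNet) (v : N.V) : ℕ := ∑ u : N.V, N.arcs v u

/-- The number of directed paths from `u` to `v`. -/
noncomputable def pathCount (N : PhyloNet) (u v : N.V) : ℕ := Nat.card (PathIn N.V N.arcs u v)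

def IsLeaf (N : PhyloNet) (v : N.V) : Prop := N.indeg v = 1 ∧ N.outdeg v = 0

/-- A binary phylogenetic network: root indeg 0 outdeg 2; other vertices are leaves,
tree vertices, or (binary) hybrid vertices. -/
def IsBinary (N : PhyloNet) : Prop :=
  N.indeg N.root = 0 ∧ N.outdeg N.root = 2 ∧
  ∀ v : N.V, v ≠ N.root →
    (N.indeg v = 1 ∧ N.outdeg v = 0) ∨
    (N.indeg v = 1 ∧ N.outdeg v = 2) ∨
    (N.indeg v = 2 ∧ N.outdeg v = 1)

/-- A (general) phylogenetic network: hybrid vertices may have indegree ≥ 2. -/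
def IsPhylo (N : PhyloNet) : Prop :=
  N.indeg N.root = 0 ∧ N.outdeg N.root = 2 ∧
  ∀ v : N.V, v ≠ N.root →
    (N.indeg v = 1 ∧ N.outdeg v = 0) ∨
    (N.indeg v = 1 ∧ N.outdeg v = 2) ∨
    (2 ≤ N.indeg v ∧ N.outdeg v = 1)

/-- The number of hybrid vertices. -/
noncomputable def hybridCard (N : PhyloNet) : ℕ := Nat.card {v : N.V // 2 ≤ N.indeg v}

/-- The hybrid number `h(N) = ∑_{h hybrid} (indeg h − 1)`; vertices of indegree ≤ 1
contribute 0 via truncated subtraction. -/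
def hybridNumber (N : PhyloNet) : ℕ := ∑ v : N.V, (N.indeg v - 1)

/-- `x` is the unique leaf of `N`. -/
def SingleLeaf (N : PhyloNet) (x : N.V) : Prop := N.IsLeaf x ∧ ∀ y : N.V, N.IsLeaf y → y = x

/-- `N` realizes the ploidy profile `m`: its leaves can be indexed so that the number of
root-to-leaf directed paths to the `i`-th leaf is `m i`. -/
def Realizes (N : PhyloNet) {n : ℕ} (m : Fin n → ℕ) : Prop :=
  ∃ x : Fin n → N.V, Function.Injective x ∧ (∀ v : N.V, N.IsLeaf v ↔ ∃ i, x i = v) ∧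
    ∀ i, N.pathCount N.root (x i) = m i

/-- The hybrid number of a ploidy profile. -/
noncomputable def profileHybridNumber {n : ℕ} (m : Fin n → ℕ) : ℕ :=
  sInf {h : ℕ | ∃ N : PhyloNet, N.IsPhylo ∧ N.Realizes m ∧ N.hybridNumber = h}

end PhyloNet


section Aux
set_option linter.unusedSectionVars false


section Generic

variable {V : Type} [Fintype V] {arcs : V → V → ℕ} {rank : V → ℕ}

lemma rank_le_of_path (hr : ∀ u v : V, 0 < arcs u v → rank u < rank v)
    {u v : V} (p : PathIn V arcs u v) : rank u ≤ rank v := by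
  induction p with
  | nil => exact le_rfl
  | cons e p ih => exact (hr _ _ e.pos).le.trans ih

lemma path_self_eq_nil (hr : ∀ u v : V, 0 < arcs u v → rank u < rank v)
    {u : V} (p : PathIn V arcs u u) : p = .nil u := by
  cases p with
  | nil => rfl
  | cons e q =>
      exact absurd (rank_le_of_path hr q) (not_le.mpr (hr _ _ e.pos))

/-- Decompose a nontrivial path by its first arc. -/
def pathConsEquiv {u v : V} (h : u ≠ v) :
    PathIn V arcs u v ≃ Σ w : V, Fin (arcs u w) × PathIn V arcs w v where
  toFun p := match p with
    | .nil _ => absurd rfl h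
    | .cons e q => ⟨_, e, q⟩
  invFun x := .cons x.2.1 x.2.2
  left_inv p := by cases p with
    | nil => exact absurd rfl h
    | cons e q => rfl
  right_inv x := rfl

lemma nat_card_sigma {ι : Type} [Fintype ι] (f : ι → Type) [∀ i, Finite (f i)] :
    Nat.card (Σ i, f i) = ∑ i, Nat.card (f i) := by
  letI : ∀ i, Fintype (f i) := fun i => Fintype.ofFinite _
  rw [Nat.card_eq_fintype_card, Fintype.card_sigma]
  exact Finset.sum_congr rfl fun i _ => (Nat.card_eq_fintype_card).symm

lemma finite_path (hr : ∀ u v : V, 0 < arcs u v → rank u < rank v)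
    (u v : V) : Finite (PathIn V arcs u v) := by
  set K := (Finset.univ.sup rank) + 1 with hK
  have hrank : ∀ w : V, rank w < K := fun w =>
    Nat.lt_succ_of_le (Finset.le_sup (Finset.mem_univ w))
  have H : ∀ k : ℕ, ∀ u v : V, K - rank u ≤ k → Finite (PathIn V arcs u v) := by
    intro k
    induction k with
    | zero =>
        intro u v h
        have := hrank u
        omega
    | succ k ih =>
        intro u v h
        by_cases huv : u = v
        · subst huv
          exact Finite.of_equiv PUnit
            ⟨fun _ => .nil u, fun _ => PUnit.unit,
             fun _ => rfl, fun p => (path_self_eq_nil hr p).symm⟩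
        · haveI : ∀ w : V, Finite (Fin (arcs u w) × PathIn V arcs w v) := by
            intro w
            by_cases hw : 0 < arcs u w
            · haveI : Finite (PathIn V arcs w v) := by
                apply ih
                have := hr u w hw
                have := hrank w
                omega
              infer_instance
            · have : arcs u w = 0 := by omega
              rw [this]
              infer_instance
          exact Finite.of_equiv _ (pathConsEquiv huv).symm
  exact H (K - rank u) u v le_rfl

lemma nat_card_path_self (hr : ∀ u v : V, 0 < arcs u v → rank u < rank v)
    (u : V) : Nat.card (PathIn V arcs u u) = 1 := by
  haveI : Unique (PathIn V arcs u u) :=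
    ⟨⟨.nil u⟩, fun p => path_self_eq_nil hr p⟩
  exact Nat.card_unique

lemma nat_card_path_cons (hr : ∀ u v : V, 0 < arcs u v → rank u < rank v)
    {u v : V} (h : u ≠ v) :
    Nat.card (PathIn V arcs u v) = ∑ w : V, arcs u w * Nat.card (PathIn V arcs w v) := by
  haveI : ∀ w : V, Finite (PathIn V arcs w v) := fun w => finite_path hr w v
  rw [Nat.card_congr (pathConsEquiv h), nat_card_sigma]
  refine Finset.sum_congr rfl fun w _ => ?_
  rw [Nat.card_prod, Nat.card_eq_fintype_card, Fintype.card_fin]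

end Generic

-- SUM HELPERS
section SumHelp

lemma sum_pred_if {n : ℕ} (v : Fin n) (f : ℕ → ℕ) :
    (∑ u : Fin n, if v.val = u.val + 1 then f u.val else 0)
      = if 1 ≤ v.val then f (v.val - 1) else 0 := by
  split
  · next h =>
      rw [Finset.sum_eq_single (⟨v.val - 1, by omega⟩ : Fin n)]
      · rw [if_pos (by simp only [Fin.val_mk]; omega)]
      · intro b _ hb
        rw [if_neg]
        intro hc
        exact hb (Fin.ext (by simp only [Fin.val_mk]; omega))
      · intro h; exact absurd (Finset.mem_univ _) h
  · next h =>
      apply Finset.sum_eq_zero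
      intro u _
      rw [if_neg]
      omega
  
lemma sum_if_val_eq {n : ℕ} (c : ℕ) (g : ℕ) :
    (∑ j : Fin n, if j.val = c then g else 0) = if c < n then g else 0 := by
  split
  · next h =>
      rw [Finset.sum_eq_single (⟨c, h⟩ : Fin n)]
      · rw [if_pos rfl]
      · intro b _ hb
        rw [if_neg]
        intro hc
        exact hb (Fin.ext hc)
      · intro h; exact absurd (Finset.mem_univ _) h
  · next h =>
      apply Finset.sum_eq_zero
      intro u _
      rw [if_neg]
      omega

lemma sum_if_const {n : ℕ} (P : Prop) [Decidable P] (f : Fin n → ℕ) :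
    (∑ j : Fin n, if P then f j else 0) = if P then ∑ j : Fin n, f j else 0 := by
  split <;> simp

end SumHelp

-- LIST GADGET SPEC
namespace Gadget

def wgt (s : List (ℕ × ℕ)) (i : ℕ) : ℕ := (s.getD i (1,0)).1

def tap (s : List (ℕ × ℕ)) (i : ℕ) : ℕ := (s.getD i (1,0)).2

lemma wgt_nil (i : ℕ) : wgt [] i = 1 := by simp [wgt]

lemma tap_nil (i : ℕ) : tap [] i = 0 := by simp [tap]

lemma wgt_cons_zero (x : ℕ × ℕ) (r : List (ℕ × ℕ)) : wgt (x :: r) 0 = x.1 := rfl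

lemma tap_cons_zero (x : ℕ × ℕ) (r : List (ℕ × ℕ)) : tap (x :: r) 0 = x.2 := rfl

lemma wgt_cons_succ (x : ℕ × ℕ) (r : List (ℕ × ℕ)) (i : ℕ) :
    wgt (x :: r) (i + 1) = wgt r i := rfl

lemma tap_cons_succ (x : ℕ × ℕ) (r : List (ℕ × ℕ)) (i : ℕ) :
    tap (x :: r) (i + 1) = tap r i := rfl

lemma wgt_of_le (s : List (ℕ × ℕ)) {i : ℕ} (h : s.length ≤ i) : wgt s i = 1 := by
  unfold wgt
  rw [List.getD_eq_default _ _ h]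

lemma tap_of_le (s : List (ℕ × ℕ)) {i : ℕ} (h : s.length ≤ i) : tap s i = 0 := by
  unfold tap
  rw [List.getD_eq_default _ _ h]

def value : List (ℕ × ℕ) → ℕ
  | [] => 1
  | (w, t) :: r => w * value r + t

lemma value_cons (x : ℕ × ℕ) (r : List (ℕ × ℕ)) :
    value (x :: r) = x.1 * value r + x.2 := by
  obtain ⟨w, t⟩ := x; rfl

def ValidFrom : Bool → List (ℕ × ℕ) → Prop
  | true, [] => True
  | false, [] => False
  | true, x :: r => x = (1,0) ∧ ValidFrom false r
  | false, x :: r => (x = (1,1) ∨ x = (2,0)) ∧ ValidFrom (decide (x.1 = 2)) r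

lemma ValidFrom.ne_nil {s : List (ℕ × ℕ)} (h : ValidFrom false s) : s ≠ [] := by
  intro hs; subst hs; exact h

-- every entry is one of the three shapes
lemma valid_entry : ∀ (s : List (ℕ × ℕ)) (f : Bool), ValidFrom f s → ∀ i < s.length,
    (wgt s i = 1 ∧ tap s i = 0) ∨ (wgt s i = 1 ∧ tap s i = 1) ∨ (wgt s i = 2 ∧ tap s i = 0) := by
  intro s
  induction s with
  | nil => intro f _ i hi; simp at hi
  | cons x r ih =>
      intro f hv i hi
      match i with
      | 0 =>
          cases f with
          | true =>
              obtain ⟨hx, _⟩ := hv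
              subst hx
              left; exact ⟨rfl, rfl⟩
          | false =>
              obtain ⟨hx, _⟩ := hv
              rcases hx with hx | hx <;> subst hx
              · right; left; exact ⟨rfl, rfl⟩
              · right; right; exact ⟨rfl, rfl⟩
      | (j + 1) =>
          rw [wgt_cons_succ, tap_cons_succ]
          cases f with
          | true => exact ih false hv.2 j (by simpa using hi)
          | false => exact ih _ hv.2 j (by simpa using hi)

lemma valid_head {s : List (ℕ × ℕ)} (h : ValidFrom false s) :
    wgt s 0 + tap s 0 = 2 := by
  match s with
  | [] => exact absurd h (by simp [ValidFrom])
  | x :: r =>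
      rcases h.1 with hx | hx <;> subst hx <;> rfl

lemma valid_step : ∀ (s : List (ℕ × ℕ)) (f : Bool), ValidFrom f s → ∀ i, i + 1 < s.length →
    (wgt s i = 2 → wgt s (i+1) = 1 ∧ tap s (i+1) = 0) ∧
    (wgt s i = 1 → wgt s (i+1) + tap s (i+1) = 2) := by
  intro s
  induction s with
  | nil => intro f _ i hi; simp at hi
  | cons x r ih =>
      intro f hv i hi
      match i with
      | 0 =>
          rw [wgt_cons_zero, wgt_cons_succ, tap_cons_succ]
          have hr : r ≠ [] := by
            intro h; subst h; simp at hi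
          constructor
          · intro hx1
            -- after weight 2, flag is true so head of r is (1,0)
            have h2 : ValidFrom true r := by
              cases f with
              | true =>
                  obtain ⟨he, _⟩ := hv
                  rw [he] at hx1
                  simp [wgt_cons_zero] at hx1
              | false =>
                  have := hv.2
                  rwa [show (decide (x.1 = 2)) = true by simp [hx1]] at this
            match r with
            | y :: r' =>
                obtain ⟨hy, _⟩ := h2
                subst hy
                exact ⟨rfl, rfl⟩
          · intro hx1
            have h2 : ValidFrom false r := by
              cases f with
              | true => exact hv.2
              | false =>
                  have := hv.2
                  rwa [show (decide (x.1 = 2)) = false by simp [hx1]] at this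
            match r with
            | y :: r' =>
                rcases h2.1 with hy | hy <;> subst hy <;> rfl
      | (j + 1) =>
          rw [wgt_cons_succ, wgt_cons_succ, tap_cons_succ]
          cases f with
          | true => exact ih false hv.2 j (by simpa using hi)
          | false => exact ih _ hv.2 j (by simpa using hi)

lemma valid_last : ∀ (s : List (ℕ × ℕ)) (f : Bool), ValidFrom f s → s ≠ [] →
    wgt s (s.length - 1) = 2 ∧ tap s (s.length - 1) = 0 := by
  intro s
  induction s with
  | nil => intro f _ h; exact absurd rfl h
  | cons x r ih =>
      intro f hv _
      by_cases hr : r = []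
      · subst hr
        cases f with
        | true =>
            obtain ⟨hx, h2⟩ := hv
            exact absurd h2 (by simp [ValidFrom])
        | false =>
            obtain ⟨hx, h2⟩ := hv
            rcases hx with hx | hx <;> subst hx
            · exact absurd h2 (by simp [ValidFrom])
            · exact ⟨rfl, rfl⟩
      · have hlen : (x :: r).length - 1 = (r.length - 1) + 1 := by
          have : r.length ≠ 0 := fun h => hr (List.length_eq_zero_iff.mp h)
          simp only [List.length_cons]
          omega
        rw [hlen, wgt_cons_succ, tap_cons_succ]
        cases f with
        | true => exact ih false hv.2 hr
        | false => exact ih _ hv.2 hr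

end Gadget

end Aux

section Aux2
set_option linter.unusedSectionVars false

namespace PhyloNet

lemma pathCount_self' (N : PhyloNet) (u : N.V) : N.pathCount u u = 1 :=
  nat_card_path_self N.rank_lt u

lemma pathCount_cons' (N : PhyloNet) {u v : N.V} (h : u ≠ v) :
    N.pathCount u v = ∑ w : N.V, N.arcs u w * N.pathCount w v :=
  nat_card_path_cons N.rank_lt h

end PhyloNet

lemma sum_if_val_eq' {n : ℕ} {c : ℕ} (hc : c < n) (f : Fin n → ℕ) :
    (∑ j : Fin n, if j.val = c then f j else 0) = f ⟨c, hc⟩ := by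
  rw [Finset.sum_eq_single (⟨c, hc⟩ : Fin n)]
  · rw [if_pos rfl]
  · intro b _ hb
    rw [if_neg]
    intro h
    exact hb (Fin.ext h)
  · intro h; exact absurd (Finset.mem_univ _) h

namespace Gadget

def chainNet (s : List (ℕ × ℕ)) : PhyloNet where
  V := Fin (s.length + 2)
  fin := inferInstance
  root := ⟨0, by omega⟩
  arcs i j := (if j.val = i.val + 1 then wgt s i.val else 0) +
              (if j.val = s.length then tap s i.val else 0)
  rank v := v.val
  rank_lt := by
    intro u v h
    have h : 0 < (if v.val = u.val + 1 then wgt s u.val else 0) +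
        (if v.val = s.length then tap s u.val else 0) := h
    show u.val < v.val
    by_cases h1 : v.val = u.val + 1
    · omega
    · rw [if_neg h1] at h
      by_cases h2 : v.val = s.length
      · rw [if_pos h2] at h
        have hu : u.val < s.length := by
          by_contra hc
          rw [tap_of_le s (by omega)] at h
          omega
        omega
      · rw [if_neg h2] at h
        omega

attribute [reducible] chainNet

/-- total tap weight -/
def T (s : List (ℕ × ℕ)) : ℕ := ∑ i ∈ Finset.range s.length, tap s i

lemma sum_tap (s : List (ℕ × ℕ)) :
    (∑ u : Fin (s.length + 2), tap s u.val) = T s := by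
  rw [Fin.sum_univ_eq_sum_range (fun i => tap s i) (s.length + 2)]
  rw [Finset.sum_range_succ, Finset.sum_range_succ,
    tap_of_le s (by omega), tap_of_le s (by omega)]
  simp [T]

lemma chain_indeg (s : List (ℕ × ℕ)) (v : (chainNet s).V) :
    (chainNet s).indeg v =
      (if 1 ≤ v.val then wgt s (v.val - 1) else 0) +
      (if v.val = s.length then T s else 0) := by
  show (∑ u : Fin (s.length + 2), ((if v.val = u.val + 1 then wgt s u.val else 0) +
      (if v.val = s.length then tap s u.val else 0))) = _
  rw [Finset.sum_add_distrib, sum_pred_if, sum_if_const, sum_tap]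

lemma chain_outdeg (s : List (ℕ × ℕ)) (u : (chainNet s).V) :
    (chainNet s).outdeg u =
      (if u.val + 1 < s.length + 2 then wgt s u.val else 0) + tap s u.val := by
  show (∑ j : Fin (s.length + 2), ((if j.val = u.val + 1 then wgt s u.val else 0) +
      (if j.val = s.length then tap s u.val else 0))) = _
  rw [Finset.sum_add_distrib, sum_if_val_eq, sum_if_val_eq,
    if_pos (show s.length < s.length + 2 by omega)]

lemma chain_pc_step (s : List (ℕ × ℕ)) (p : ℕ) (hp : p ≤ s.length) :
    (chainNet s).pathCount ⟨p, by omega⟩ ⟨s.length + 1, by omega⟩ =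
      wgt s p * (chainNet s).pathCount ⟨p + 1, by omega⟩ ⟨s.length + 1, by omega⟩ +
      tap s p * (chainNet s).pathCount ⟨s.length, by omega⟩ ⟨s.length + 1, by omega⟩ := by
  rw [PhyloNet.pathCount_cons' (chainNet s) (u := ⟨p, by omega⟩)
    (v := ⟨s.length + 1, by omega⟩) (by intro h; rw [Fin.mk.injEq] at h; omega)]
  have : ∀ w : (chainNet s).V,
      (chainNet s).arcs ⟨p, by omega⟩ w * (chainNet s).pathCount w ⟨s.length + 1, by omega⟩ =
      (if w.val = p + 1 then wgt s p * (chainNet s).pathCount w ⟨s.length + 1, by omega⟩ else 0) +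
      (if w.val = s.length then tap s p * (chainNet s).pathCount w ⟨s.length + 1, by omega⟩ else 0) := by
    intro w
    show ((if w.val = p + 1 then wgt s p else 0) + (if w.val = s.length then tap s p else 0)) * _ = _
    simp only [add_mul, ite_mul, zero_mul]
  rw [Finset.sum_congr rfl (fun w _ => this w), Finset.sum_add_distrib]
  show ((∑ x : Fin (s.length + 2), if x.val = p + 1 then
        wgt s p * (chainNet s).pathCount x ⟨s.length + 1, by omega⟩ else 0) +
      (∑ x : Fin (s.length + 2), if x.val = s.length then
        tap s p * (chainNet s).pathCount x ⟨s.length + 1, by omega⟩ else 0)) = _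
  rw [sum_if_val_eq' (show p + 1 < s.length + 2 by omega),
    sum_if_val_eq' (show s.length < s.length + 2 by omega)]

lemma chain_pc_H (s : List (ℕ × ℕ)) :
    (chainNet s).pathCount ⟨s.length, by omega⟩ ⟨s.length + 1, by omega⟩ = 1 := by
  have := chain_pc_step s s.length le_rfl
  rw [this, wgt_of_le s le_rfl, tap_of_le s le_rfl,
    PhyloNet.pathCount_self']
  simp

lemma chain_pc (s : List (ℕ × ℕ)) (p : ℕ) (hp : p ≤ s.length) :
    (chainNet s).pathCount ⟨p, by omega⟩ ⟨s.length + 1, by omega⟩ = value (s.drop p) := by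
  have main : ∀ d p (hple : p ≤ s.length), s.length - p ≤ d →
      (chainNet s).pathCount ⟨p, by omega⟩ ⟨s.length + 1, by omega⟩ = value (s.drop p) := by
    intro d
    induction d with
    | zero =>
        intro p hple hd
        have : p = s.length := by omega
        subst this
        rw [List.drop_of_length_le le_rfl]
        exact chain_pc_H s
    | succ d ih =>
        intro p hple hd
        by_cases hpl : p = s.length
        · subst hpl
          rw [List.drop_of_length_le le_rfl]
          exact chain_pc_H s
        · have hplt : p < s.length := by omega
          rw [chain_pc_step s p hple, chain_pc_H s,
            ih (p + 1) (by omega) (by omega),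
            List.drop_eq_getElem_cons hplt, value_cons,
            ← List.getD_eq_getElem s (1,0) hplt]
          simp [wgt, tap]
  exact main (s.length - p) p hp le_rfl

end Gadget
end Aux2

section Aux3
set_option linter.unusedSectionVars false
namespace Gadget

def cost (s : List (ℕ × ℕ)) : ℕ := (s.map (fun e => e.1 - 1 + e.2)).sum

lemma sum_range_fn (s : List (ℕ × ℕ)) (f : ℕ × ℕ → ℕ) :
    (∑ q ∈ Finset.range s.length, f (s.getD q (1,0))) = (s.map f).sum := by
  induction s with
  | nil => simp
  | cons x r ih =>
      rw [List.length_cons, Finset.sum_range_succ']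
      simp only [List.getD_cons_succ, List.getD_cons_zero, List.map_cons, List.sum_cons]
      rw [ih, add_comm]

lemma T_eq (s : List (ℕ × ℕ)) : T s = (s.map (fun e => e.2)).sum := by
  rw [← sum_range_fn s (fun e => e.2)]
  rfl

lemma chain_hybrid (s : List (ℕ × ℕ)) (hv : ValidFrom false s) :
    (chainNet s).hybridNumber = cost s := by
  obtain ⟨L', hL⟩ : ∃ L', s.length = L' + 1 := by
    have := hv.ne_nil
    exact ⟨s.length - 1, by
      have : 0 < s.length := List.length_pos_iff.mpr hv.ne_nil
      omega⟩
  have hlast := valid_last s false hv hv.ne_nil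
  rw [hL] at hlast
  simp only [Nat.add_sub_cancel] at hlast
  -- hybridNumber as a range sum
  have h1 : (chainNet s).hybridNumber =
      ∑ p ∈ Finset.range (s.length + 2),
        ((if 1 ≤ p then wgt s (p - 1) else 0) + (if p = s.length then T s else 0) - 1) := by
    show (∑ v : Fin (s.length + 2), ((chainNet s).indeg v - 1)) = _
    rw [← Fin.sum_univ_eq_sum_range
      (fun p => (if 1 ≤ p then wgt s (p - 1) else 0) + (if p = s.length then T s else 0) - 1)]
    exact Finset.sum_congr rfl fun v _ => by rw [chain_indeg]
  rw [h1, hL]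
  rw [show L' + 1 + 2 = (L' + 2) + 1 by omega, Finset.sum_range_succ]
  rw [show L' + 2 = (L' + 1) + 1 by omega, Finset.sum_range_succ]
  rw [Finset.sum_range_succ']
  have e1 : (if 1 ≤ L' + 1 + 1 then wgt s (L' + 1 + 1 - 1) else 0) +
      (if L' + 1 + 1 = L' + 1 then T s else 0) - 1 = 0 := by
    rw [if_pos (by omega), if_neg (by omega), wgt_of_le s (by omega)]
  have e2 : (if 1 ≤ L' + 1 then wgt s (L' + 1 - 1) else 0) +
      (if L' + 1 = L' + 1 then T s else 0) - 1 = 1 + T s := by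
    rw [if_pos (by omega), if_pos rfl]
    simp only [Nat.add_sub_cancel]
    rw [hlast.1]
    omega
  have e3 : (if 1 ≤ 0 then wgt s (0 - 1) else 0) + (if 0 = L' + 1 then T s else 0) - 1 = 0 := by
    rw [if_neg (by omega), if_neg (by omega)]
  rw [e1, e2, e3]
  have e4 : ∀ q ∈ Finset.range L',
      (if 1 ≤ q + 1 then wgt s (q + 1 - 1) else 0) +
        (if q + 1 = L' + 1 then T s else 0) - 1 = wgt s q - 1 := by
    intro q hq
    rw [Finset.mem_range] at hq
    rw [if_pos (by omega), if_neg (by omega)]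
    simp
  rw [Finset.sum_congr rfl e4]
  -- now compute cost
  have c1 : cost s = (∑ q ∈ Finset.range (L' + 1), (wgt s q - 1 + tap s q)) := by
    unfold cost
    rw [← sum_range_fn s (fun e => e.1 - 1 + e.2), hL]
    rfl
  have c2 : T s = ∑ q ∈ Finset.range (L' + 1), tap s q := by
    unfold T
    rw [hL]
  rw [c1, c2, Finset.sum_range_succ, Finset.sum_range_succ, hlast.1, hlast.2,
    Finset.sum_add_distrib]
  omega

lemma chain_wgt_pos (s : List (ℕ × ℕ)) (hv : ValidFrom false s) (q : ℕ) : 1 ≤ wgt s q := by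
  by_cases hq : q < s.length
  · rcases valid_entry s false hv q hq with h | h | h <;> omega
  · rw [wgt_of_le s (by omega)]

lemma chain_outdeg_zero_iff (s : List (ℕ × ℕ)) (hv : ValidFrom false s)
    (v : (chainNet s).V) : (chainNet s).outdeg v = 0 ↔ v.val = s.length + 1 := by
  rw [chain_outdeg]
  constructor
  · intro h
    by_contra hc
    have hvlt : v.val < s.length + 1 := by
      have := v.isLt
      omega
    rw [if_pos (by omega)] at h
    have := chain_wgt_pos s hv v.val
    omega
  · intro h
    rw [if_neg (by omega), tap_of_le s (by omega)]

lemma chain_classify (s : List (ℕ × ℕ)) (hv : ValidFrom false s)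
    (v : (chainNet s).V) (hvr : v ≠ (chainNet s).root) :
    ((chainNet s).indeg v = 1 ∧ (chainNet s).outdeg v = 0) ∨
    ((chainNet s).indeg v = 1 ∧ (chainNet s).outdeg v = 2) ∨
    (2 ≤ (chainNet s).indeg v ∧ (chainNet s).outdeg v = 1) := by
  have hL : 0 < s.length := List.length_pos_iff.mpr hv.ne_nil
  have hv1 : 1 ≤ v.val := by
    by_contra hc
    exact hvr (Fin.ext (show v.val = 0 by omega))
  have hlast := valid_last s false hv hv.ne_nil
  rw [chain_indeg, chain_outdeg, if_pos hv1]
  by_cases hleaf : v.val = s.length + 1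
  · left
    rw [if_neg (by omega), if_neg (by omega), hleaf, tap_of_le s (by omega),
      Nat.add_sub_cancel, wgt_of_le s (by omega)]
    simp
  · by_cases hH : v.val = s.length
    · right; right
      rw [if_pos hH, if_pos (by omega), hH, tap_of_le s (by omega),
        hlast.1, wgt_of_le s (le_refl s.length)]
      omega
    · -- internal chain vertex: 1 ≤ v < L
      have hvlt : v.val < s.length := by
        have := v.isLt
        omega
      rw [if_neg hH, if_pos (by omega)]
      have hstep := valid_step s false hv (v.val - 1) (by omega)
      rw [show v.val - 1 + 1 = v.val by omega] at hstep
      rcases valid_entry s false hv (v.val - 1) (by omega) with h | h | h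
      · right; left
        rw [h.1]
        have := hstep.2 h.1
        omega
      · right; left
        rw [h.1]
        have := hstep.2 h.1
        omega
      · right; right
        have := hstep.1 h.1
        rw [h.1]
        omega

end Gadget
end Aux3

section Aux4
set_option linter.unusedSectionVars false
namespace Gadget

def seg (b : ℕ) : List (ℕ × ℕ) := if b = 1 then [(1,1),(2,0)] else [(2,0)]

def spec : List ℕ → List (ℕ × ℕ)
  | [] => []
  | [b] => seg b
  | b :: c :: r => seg b ++ (1,0) :: spec (c :: r)

lemma vf_seg (b : ℕ) (r : List (ℕ × ℕ)) (hr : ValidFrom true r ∨ r = []) :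
    ValidFrom false (seg b ++ r) := by
  have hr' : ValidFrom true r := by
    rcases hr with h | h
    · exact h
    · subst h; trivial
  by_cases hb : b = 1
  · rw [seg, if_pos hb]
    show ValidFrom false ((1,1) :: (2,0) :: r)
    refine ⟨Or.inl rfl, ?_⟩
    show ValidFrom false ((2,0) :: r)
    exact ⟨Or.inr rfl, hr'⟩
  · rw [seg, if_neg hb]
    show ValidFrom false ((2,0) :: r)
    exact ⟨Or.inr rfl, hr'⟩

lemma valid_spec : ∀ bs : List ℕ, bs ≠ [] → ValidFrom false (spec bs) := by
  intro bs
  induction bs with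
  | nil => intro h; exact absurd rfl h
  | cons b r ih =>
      intro _
      cases r with
      | nil =>
          show ValidFrom false (spec [b])
          rw [show spec [b] = seg b from rfl, ← List.append_nil (seg b)]
          exact vf_seg b [] (Or.inr rfl)
      | cons c r' =>
          show ValidFrom false (seg b ++ (1,0) :: spec (c :: r'))
          refine vf_seg b _ (Or.inl ?_)
          exact ⟨rfl, ih (by simp)⟩

lemma value_seg (b : ℕ) (hb : b < 2) (l : List (ℕ × ℕ)) :
    value (seg b ++ l) = 2 * value l + b := by
  by_cases h1 : b = 1
  · subst h1
    rw [seg, if_pos rfl]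
    show value ((1,1) :: (2,0) :: l) = _
    rw [value_cons, value_cons]
    ring
  · have h0 : b = 0 := by omega
    subst h0
    rw [seg, if_neg (by omega)]
    show value ((2,0) :: l) = _
    rw [value_cons]

lemma value_spec : ∀ bs : List ℕ, (∀ b ∈ bs, b < 2) →
    value (spec bs) = 2 ^ bs.length + Nat.ofDigits 2 bs := by
  intro bs
  induction bs with
  | nil => intro _; simp [spec, value]
  | cons b r ih =>
      intro hb
      cases r with
      | nil =>
          show value (seg b) = _
          rw [← List.append_nil (seg b), value_seg b (hb b (by simp)) []]
          simp [value, Nat.ofDigits]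
      | cons c r' =>
          show value (seg b ++ (1,0) :: spec (c :: r')) = _
          rw [value_seg b (hb b (by simp)) _, value_cons]
          simp only [one_mul, add_zero]
          rw [ih (fun x hx => hb x (by simp [hx]))]
          simp only [Nat.ofDigits_cons, List.length_cons, pow_succ, Nat.cast_id]
          ring

lemma cost_append (l1 l2 : List (ℕ × ℕ)) : cost (l1 ++ l2) = cost l1 + cost l2 := by
  unfold cost
  rw [List.map_append, List.sum_append]

lemma cost_seg (b : ℕ) (hb : b < 2) : cost (seg b) = 1 + b := by
  by_cases h1 : b = 1
  · subst h1; rfl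
  · have h0 : b = 0 := by omega
    subst h0
    rfl

lemma cost_spec : ∀ bs : List ℕ, (∀ b ∈ bs, b < 2) →
    cost (spec bs) = bs.length + bs.sum := by
  intro bs
  induction bs with
  | nil => intro _; rfl
  | cons b r ih =>
      intro hb
      cases r with
      | nil =>
          show cost (seg b) = _
          rw [cost_seg b (hb b (by simp))]
          simp
      | cons c r' =>
          show cost (seg b ++ (1,0) :: spec (c :: r')) = _
          rw [cost_append, cost_seg b (hb b (by simp))]
          have : cost ((1,0) :: spec (c :: r')) = cost (spec (c :: r')) := by
            unfold cost
            simp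
          rw [this, ih (fun x hx => hb x (by simp [hx]))]
          simp [List.sum_cons, List.length_cons]
          ring

end Gadget
end Aux4

section Aux5
set_option linter.unusedSectionVars false
namespace Gadget

/-- Pre-network: like `IsPhylo` but the root may itself be the unique vertex/leaf. -/
def Pre (N : PhyloNet) {j : ℕ} (μ : Fin j → ℕ) : Prop :=
  N.indeg N.root = 0 ∧ (N.outdeg N.root = 0 ∨ N.outdeg N.root = 2) ∧
  (∀ v : N.V, v ≠ N.root →
    (N.indeg v = 1 ∧ N.outdeg v = 0) ∨
    (N.indeg v = 1 ∧ N.outdeg v = 2) ∨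
    (2 ≤ N.indeg v ∧ N.outdeg v = 1)) ∧
  ∃ x : Fin j → N.V, Function.Injective x ∧
    (∀ v : N.V, N.outdeg v = 0 ↔ ∃ i, x i = v) ∧
    ∀ i, N.pathCount N.root (x i) = μ i

lemma chain_root_outdeg (s : List (ℕ × ℕ)) (hv : ValidFrom false s) :
    (chainNet s).outdeg (chainNet s).root = 2 := by
  rw [chain_outdeg]
  have h0 : ((chainNet s).root : Fin (s.length + 2)).val = 0 := rfl
  rw [h0, if_pos (by omega)]
  exact valid_head hv

lemma chain_Pre (s : List (ℕ × ℕ)) (hv : ValidFrom false s) :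
    Pre (chainNet s) (fun _ : Fin 1 => value s) := by
  have hL : 0 < s.length := List.length_pos_iff.mpr hv.ne_nil
  refine ⟨?_, Or.inr (chain_root_outdeg s hv), chain_classify s hv, ?_⟩
  · rw [chain_indeg]
    have h0 : ((chainNet s).root : Fin (s.length + 2)).val = 0 := rfl
    rw [h0, if_neg (by omega), if_neg (by omega)]
  · refine ⟨fun _ => ⟨s.length + 1, by omega⟩, fun a b _ => Subsingleton.elim a b, ?_, ?_⟩
    · intro v
      rw [chain_outdeg_zero_iff s hv]
      constructor
      · intro h
        exact ⟨0, (Fin.ext h.symm : (⟨s.length + 1, by omega⟩ : Fin (s.length + 2)) = v)⟩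
      · rintro ⟨i, rfl⟩
        rfl
    · intro i
      have := chain_pc s 0 (Nat.zero_le _)
      rw [List.drop_zero] at this
      exact this

def oneNet : PhyloNet where
  V := Fin 1
  fin := inferInstance
  root := 0
  arcs _ _ := 0
  rank _ := 0
  rank_lt := by intro u v h; exact absurd h (by simp)

lemma oneNet_sub (a b : oneNet.V) : a = b := by
  have h1 : a.val < 1 := a.isLt
  have h2 : b.val < 1 := b.isLt
  exact Fin.ext (by omega)

lemma oneNet_deg (v : oneNet.V) : oneNet.indeg v = 0 ∧ oneNet.outdeg v = 0 := by
  constructor <;> · show (∑ _u : Fin 1, 0) = 0; simp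

lemma oneNet_Pre : Pre oneNet (fun _ : Fin 1 => 1) := by
  refine ⟨(oneNet_deg _).1, Or.inl (oneNet_deg _).2, ?_, ?_⟩
  · intro v hv
    exact absurd (oneNet_sub v oneNet.root) hv
  · refine ⟨fun _ => oneNet.root, fun a b _ => oneNet_sub a b, ?_, ?_⟩
    · intro v
      simp only [(oneNet_deg v).2, true_iff]
      exact ⟨0, oneNet_sub _ _⟩
    · intro i
      exact oneNet.pathCount_self' _

lemma oneNet_hybrid : oneNet.hybridNumber = 0 := by
  show (∑ v : Fin 1, (oneNet.indeg v - 1)) = 0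
  apply Finset.sum_eq_zero
  intro v _
  rw [(oneNet_deg v).1]
  rfl

lemma gadget_exists (m : ℕ) (hm : 1 ≤ m) :
    ∃ N : PhyloNet, Pre N (fun _ : Fin 1 => m) ∧
      N.hybridNumber = Nat.log 2 m + (Nat.digits 2 m).sum - 1 ∧
      (2 ≤ m → N.outdeg N.root = 2) := by
  rcases eq_or_lt_of_le hm with h1 | h2
  · -- m = 1
    refine ⟨oneNet, ?_, ?_, ?_⟩
    · rw [show m = 1 from h1.symm]
      exact oneNet_Pre
    · rw [show m = 1 from h1.symm, oneNet_hybrid, Nat.log_one_right,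
        Nat.digits_def' (show 1 < 2 by norm_num) (show 0 < 1 by norm_num)]
      norm_num
    · intro h; omega
  · -- m ≥ 2
    have hm0 : m ≠ 0 := by omega
    set ds := Nat.digits 2 m with hds
    have hdnil : ds ≠ [] := Nat.digits_ne_nil_iff_ne_zero.mpr hm0
    set bs := ds.dropLast with hbs
    have hlen : ds.length = Nat.log 2 m + 1 := Nat.digits_len 2 m (by norm_num) hm0
    have hbslen : bs.length = Nat.log 2 m := by
      rw [hbs, List.length_dropLast, hlen]
      omega
    have hlogpos : 0 < Nat.log 2 m := Nat.log_pos (by norm_num) h2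
    have hbsnil : bs ≠ [] := by
      intro h
      rw [h] at hbslen
      simp at hbslen
      omega
    have hlast1 : ds.getLast hdnil = 1 := by
      have h1 : ds.getLast hdnil ≠ 0 := Nat.getLast_digit_ne_zero 2 hm0
      have h2' : ds.getLast hdnil < 2 :=
        Nat.digits_lt_base (by norm_num) (List.getLast_mem hdnil)
      omega
    have hsplit : bs ++ [1] = ds := by
      rw [hbs, ← hlast1]
      exact List.dropLast_append_getLast hdnil
    have hbslt : ∀ b ∈ bs, b < 2 := by
      intro b hb
      apply Nat.digits_lt_base (by norm_num) (m := m)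
      rw [← hds, ← hsplit]
      exact List.mem_append_left _ hb
    have hval : value (spec bs) = m := by
      rw [value_spec bs hbslt]
      have h3 : Nat.ofDigits 2 (bs ++ [1]) = m := by
        rw [hsplit]
        exact Nat.ofDigits_digits 2 m
      rw [Nat.ofDigits_append] at h3
      simp only [Nat.ofDigits_cons, Nat.ofDigits_nil, Nat.cast_id, mul_zero,
        add_zero, mul_one] at h3
      omega
    have hvalid : ValidFrom false (spec bs) := valid_spec bs hbsnil
    have hsum : ds.sum = bs.sum + 1 := by
      rw [← hsplit, List.sum_append]
      simp
    refine ⟨chainNet (spec bs), ?_, ?_, fun _ => chain_root_outdeg _ hvalid⟩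
    · have := chain_Pre (spec bs) hvalid
      rwa [show (fun _ : Fin 1 => value (spec bs)) = (fun _ : Fin 1 => m) from
        funext fun _ => hval] at this
    · rw [chain_hybrid _ hvalid, cost_spec bs hbslt, hbslen, hsum]
      omega

end Gadget
end Aux5

section Aux6
set_option linter.unusedSectionVars false
open scoped Classical
namespace Gadget

variable (N M : PhyloNet)

noncomputable def joinNet : PhyloNet where
  V := Option (N.V ⊕ M.V)
  fin := inferInstance
  root := none
  arcs u v :=
    match u, v with
    | none, some (Sum.inl x) => if x = N.root then 1 else 0
    | none, some (Sum.inr y) => if y = M.root then 1 else 0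
    | some (Sum.inl x), some (Sum.inl x') => N.arcs x x'
    | some (Sum.inr y), some (Sum.inr y') => M.arcs y y'
    | _, _ => 0
  rank u :=
    match u with
    | none => 0
    | some (Sum.inl x) => N.rank x + 1
    | some (Sum.inr y) => M.rank y + 1
  rank_lt := by
    rintro (_ | x | y) (_ | x' | y') h <;> dsimp only at h ⊢ <;>
      first
      | omega
      | (exact Nat.add_lt_add_right (N.rank_lt _ _ h) 1)
      | (exact Nat.add_lt_add_right (M.rank_lt _ _ h) 1)

attribute [reducible] joinNet

lemma join_indeg_none : (joinNet N M).indeg none = 0 := by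
  show (∑ u : Option (N.V ⊕ M.V), (joinNet N M).arcs u none) = 0
  rw [Fintype.sum_option, Fintype.sum_sum_type]
  simp [joinNet]

lemma join_indeg_inl (x : N.V) :
    (joinNet N M).indeg (some (Sum.inl x)) = (if x = N.root then 1 else 0) + N.indeg x := by
  show (∑ u : Option (N.V ⊕ M.V), (joinNet N M).arcs u (some (Sum.inl x))) = _
  rw [Fintype.sum_option, Fintype.sum_sum_type]
  show (if x = N.root then 1 else 0) + ((∑ a : N.V, N.arcs a x) + (∑ _b : M.V, 0)) = _
  simp only [Finset.sum_const_zero, add_zero, zero_add]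
  rfl

lemma join_indeg_inr (y : M.V) :
    (joinNet N M).indeg (some (Sum.inr y)) = (if y = M.root then 1 else 0) + M.indeg y := by
  show (∑ u : Option (N.V ⊕ M.V), (joinNet N M).arcs u (some (Sum.inr y))) = _
  rw [Fintype.sum_option, Fintype.sum_sum_type]
  show (if y = M.root then 1 else 0) + ((∑ _a : N.V, 0) + (∑ b : M.V, M.arcs b y)) = _
  simp only [Finset.sum_const_zero, add_zero, zero_add]
  rfl

lemma join_outdeg_none : (joinNet N M).outdeg none = 2 := by
  show (∑ u : Option (N.V ⊕ M.V), (joinNet N M).arcs none u) = 2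
  rw [Fintype.sum_option, Fintype.sum_sum_type]
  show 0 + ((∑ a : N.V, if a = N.root then 1 else 0) +
      (∑ b : M.V, if b = M.root then 1 else 0)) = 2
  rw [Finset.sum_ite_eq' Finset.univ N.root (fun _ => 1),
    Finset.sum_ite_eq' Finset.univ M.root (fun _ => 1)]
  simp

lemma join_outdeg_inl (x : N.V) :
    (joinNet N M).outdeg (some (Sum.inl x)) = N.outdeg x := by
  show (∑ u : Option (N.V ⊕ M.V), (joinNet N M).arcs (some (Sum.inl x)) u) = _
  rw [Fintype.sum_option, Fintype.sum_sum_type]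
  show 0 + ((∑ a : N.V, N.arcs x a) + (∑ _b : M.V, 0)) = _
  simp only [Finset.sum_const_zero, add_zero, zero_add]
  rfl

lemma join_outdeg_inr (y : M.V) :
    (joinNet N M).outdeg (some (Sum.inr y)) = M.outdeg y := by
  show (∑ u : Option (N.V ⊕ M.V), (joinNet N M).arcs (some (Sum.inr y)) u) = _
  rw [Fintype.sum_option, Fintype.sum_sum_type]
  show 0 + ((∑ _a : N.V, 0) + (∑ b : M.V, M.arcs y b)) = _
  simp only [Finset.sum_const_zero, add_zero, zero_add]
  rfl

lemma join_pc_inl (y : N.V) :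
    ∀ x : N.V, (joinNet N M).pathCount (some (Sum.inl x)) (some (Sum.inl y)) =
      N.pathCount x y := by
  set K := (Finset.univ.sup N.rank) + 1 with hK
  have hrank : ∀ w : N.V, N.rank w < K := fun w =>
    Nat.lt_succ_of_le (Finset.le_sup (Finset.mem_univ w))
  have H : ∀ k : ℕ, ∀ x : N.V, K - N.rank x ≤ k →
      (joinNet N M).pathCount (some (Sum.inl x)) (some (Sum.inl y)) = N.pathCount x y := by
    intro k
    induction k with
    | zero =>
        intro x h
        have := hrank x
        omega
    | succ k ih =>
        intro x h
        by_cases hxy : x = y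
        · subst hxy
          rw [(joinNet N M).pathCount_self', N.pathCount_self']
        · rw [(joinNet N M).pathCount_cons'
            (by intro hc; exact hxy (by injection hc with hc; injection hc)),
            N.pathCount_cons' hxy]
          show (∑ w : Option (N.V ⊕ M.V), (joinNet N M).arcs (some (Sum.inl x)) w *
            (joinNet N M).pathCount w (some (Sum.inl y))) = _
          rw [Fintype.sum_option, Fintype.sum_sum_type]
          have hz1 : (joinNet N M).arcs (some (Sum.inl x)) none = 0 := rfl
          rw [hz1, zero_mul, zero_add]
          have hz2 : ∀ b : M.V,
              (joinNet N M).arcs (some (Sum.inl x)) (some (Sum.inr b)) = 0 := fun _ => rfl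
          have e2 : (∑ b : M.V, (joinNet N M).arcs (some (Sum.inl x)) (some (Sum.inr b)) *
              (joinNet N M).pathCount (some (Sum.inr b)) (some (Sum.inl y))) = 0 := by
            apply Finset.sum_eq_zero
            intro b _
            rw [hz2 b, zero_mul]
          rw [e2, add_zero]
          apply Finset.sum_congr rfl
          intro a _
          have ha : (joinNet N M).arcs (some (Sum.inl x)) (some (Sum.inl a)) = N.arcs x a := rfl
          rw [ha]
          by_cases haz : 0 < N.arcs x a
          · rw [ih a (by have := N.rank_lt x a haz; have := hrank a; omega)]
          · have : N.arcs x a = 0 := by omega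
            rw [this, zero_mul, zero_mul]
  intro x
  exact H (K - N.rank x) x le_rfl

lemma join_path_stay_inr {u v : Option (N.V ⊕ M.V)}
    (p : PathIn (Option (N.V ⊕ M.V)) (joinNet N M).arcs u v) :
    ∀ b : M.V, u = some (Sum.inr b) → ∃ b' : M.V, v = some (Sum.inr b') := by
  induction p with
  | nil => intro b hb; exact ⟨b, hb⟩
  | @cons u w w' e p ih =>
      intro b hb
      subst hb
      have hpos := e.pos
      match w, hpos with
      | some (Sum.inr b2), _ => exact ih b2 rfl
      | none, hpos => exact absurd hpos (by simp [joinNet])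
      | some (Sum.inl a), hpos => exact absurd hpos (by simp [joinNet])

lemma join_pc_inr_inl (y : M.V) (x : N.V) :
    (joinNet N M).pathCount (some (Sum.inr y)) (some (Sum.inl x)) = 0 := by
  have : IsEmpty (PathIn (joinNet N M).V (joinNet N M).arcs
      (some (Sum.inr y)) (some (Sum.inl x))) := by
    constructor
    intro p
    obtain ⟨b', hb'⟩ := join_path_stay_inr N M p y rfl
    simp at hb'
  haveI := this
  exact Nat.card_of_isEmpty

lemma join_pc_root_inl (x : N.V) :
    (joinNet N M).pathCount none (some (Sum.inl x)) = N.pathCount N.root x := by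
  rw [(joinNet N M).pathCount_cons' (by simp)]
  show (∑ w : Option (N.V ⊕ M.V), (joinNet N M).arcs none w *
    (joinNet N M).pathCount w (some (Sum.inl x))) = _
  rw [Fintype.sum_option, Fintype.sum_sum_type]
  have hz1 : (joinNet N M).arcs none none = 0 := rfl
  rw [hz1, zero_mul, zero_add]
  have e2 : (∑ b : M.V, (joinNet N M).arcs none (some (Sum.inr b)) *
      (joinNet N M).pathCount (some (Sum.inr b)) (some (Sum.inl x))) = 0 := by
    apply Finset.sum_eq_zero
    intro b _
    rw [join_pc_inr_inl, mul_zero]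
  rw [e2, add_zero]
  have e1 : (∑ a : N.V, (joinNet N M).arcs none (some (Sum.inl a)) *
      (joinNet N M).pathCount (some (Sum.inl a)) (some (Sum.inl x))) =
      (joinNet N M).pathCount (some (Sum.inl N.root)) (some (Sum.inl x)) := by
    have : ∀ a : N.V, (joinNet N M).arcs none (some (Sum.inl a)) *
        (joinNet N M).pathCount (some (Sum.inl a)) (some (Sum.inl x)) =
        if a = N.root then
          (joinNet N M).pathCount (some (Sum.inl a)) (some (Sum.inl x)) else 0 := by
      intro a
      have : (joinNet N M).arcs none (some (Sum.inl a)) = if a = N.root then 1 else 0 := rfl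
      rw [this]
      split <;> simp
    rw [Finset.sum_congr rfl (fun a _ => this a),
      Finset.sum_ite_eq' Finset.univ N.root
        (fun a => (joinNet N M).pathCount (some (Sum.inl a)) (some (Sum.inl x)))]
    simp
  rw [e1, join_pc_inl]

end Gadget
end Aux6

section Aux7
set_option linter.unusedSectionVars false
open scoped Classical
namespace Gadget

variable (N M : PhyloNet)

lemma join_pc_inr (y : M.V) :
    ∀ x : M.V, (joinNet N M).pathCount (some (Sum.inr x)) (some (Sum.inr y)) =
      M.pathCount x y := by
  set K := (Finset.univ.sup M.rank) + 1 with hK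
  have hrank : ∀ w : M.V, M.rank w < K := fun w =>
    Nat.lt_succ_of_le (Finset.le_sup (Finset.mem_univ w))
  have H : ∀ k : ℕ, ∀ x : M.V, K - M.rank x ≤ k →
      (joinNet N M).pathCount (some (Sum.inr x)) (some (Sum.inr y)) = M.pathCount x y := by
    intro k
    induction k with
    | zero =>
        intro x h
        have := hrank x
        omega
    | succ k ih =>
        intro x h
        by_cases hxy : x = y
        · subst hxy
          rw [(joinNet N M).pathCount_self', M.pathCount_self']
        · rw [(joinNet N M).pathCount_cons'
            (by intro hc; exact hxy (by injection hc with hc; injection hc)),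
            M.pathCount_cons' hxy]
          show (∑ w : Option (N.V ⊕ M.V), (joinNet N M).arcs (some (Sum.inr x)) w *
            (joinNet N M).pathCount w (some (Sum.inr y))) = _
          rw [Fintype.sum_option, Fintype.sum_sum_type]
          have hz1 : (joinNet N M).arcs (some (Sum.inr x)) none = 0 := rfl
          rw [hz1, zero_mul, zero_add]
          have e2 : (∑ a : N.V, (joinNet N M).arcs (some (Sum.inr x)) (some (Sum.inl a)) *
              (joinNet N M).pathCount (some (Sum.inl a)) (some (Sum.inr y))) = 0 := by
            apply Finset.sum_eq_zero
            intro a _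
            have : (joinNet N M).arcs (some (Sum.inr x)) (some (Sum.inl a)) = 0 := rfl
            rw [this, zero_mul]
          rw [e2, zero_add]
          apply Finset.sum_congr rfl
          intro b _
          have hb : (joinNet N M).arcs (some (Sum.inr x)) (some (Sum.inr b)) = M.arcs x b := rfl
          rw [hb]
          by_cases hbz : 0 < M.arcs x b
          · rw [ih b (by have := M.rank_lt x b hbz; have := hrank b; omega)]
          · have : M.arcs x b = 0 := by omega
            rw [this, zero_mul, zero_mul]
  intro x
  exact H (K - M.rank x) x le_rfl

lemma join_path_stay_inl {u v : Option (N.V ⊕ M.V)}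
    (p : PathIn (Option (N.V ⊕ M.V)) (joinNet N M).arcs u v) :
    ∀ a : N.V, u = some (Sum.inl a) → ∃ a' : N.V, v = some (Sum.inl a') := by
  induction p with
  | nil => intro a ha; exact ⟨a, ha⟩
  | @cons u w w' e p ih =>
      intro a ha
      subst ha
      have hpos := e.pos
      match w, hpos with
      | some (Sum.inl a2), _ => exact ih a2 rfl
      | none, hpos => exact absurd hpos (by simp [joinNet])
      | some (Sum.inr b), hpos => exact absurd hpos (by simp [joinNet])

lemma join_pc_inl_inr (x : N.V) (y : M.V) :
    (joinNet N M).pathCount (some (Sum.inl x)) (some (Sum.inr y)) = 0 := by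
  have : IsEmpty (PathIn (joinNet N M).V (joinNet N M).arcs
      (some (Sum.inl x)) (some (Sum.inr y))) := by
    constructor
    intro p
    obtain ⟨a', ha'⟩ := join_path_stay_inl N M p x rfl
    simp at ha'
  haveI := this
  exact Nat.card_of_isEmpty

lemma join_pc_root_inr (y : M.V) :
    (joinNet N M).pathCount none (some (Sum.inr y)) = M.pathCount M.root y := by
  rw [(joinNet N M).pathCount_cons' (by simp)]
  show (∑ w : Option (N.V ⊕ M.V), (joinNet N M).arcs none w *
    (joinNet N M).pathCount w (some (Sum.inr y))) = _
  rw [Fintype.sum_option, Fintype.sum_sum_type]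
  have hz1 : (joinNet N M).arcs none none = 0 := rfl
  rw [hz1, zero_mul, zero_add]
  have e1 : (∑ a : N.V, (joinNet N M).arcs none (some (Sum.inl a)) *
      (joinNet N M).pathCount (some (Sum.inl a)) (some (Sum.inr y))) = 0 := by
    apply Finset.sum_eq_zero
    intro a _
    rw [join_pc_inl_inr, mul_zero]
  rw [e1, zero_add]
  have e2 : (∑ b : M.V, (joinNet N M).arcs none (some (Sum.inr b)) *
      (joinNet N M).pathCount (some (Sum.inr b)) (some (Sum.inr y))) =
      (joinNet N M).pathCount (some (Sum.inr M.root)) (some (Sum.inr y)) := by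
    have h : ∀ b : M.V, (joinNet N M).arcs none (some (Sum.inr b)) *
        (joinNet N M).pathCount (some (Sum.inr b)) (some (Sum.inr y)) =
        if b = M.root then
          (joinNet N M).pathCount (some (Sum.inr b)) (some (Sum.inr y)) else 0 := by
      intro b
      have : (joinNet N M).arcs none (some (Sum.inr b)) = if b = M.root then 1 else 0 := rfl
      rw [this]
      split <;> simp
    rw [Finset.sum_congr rfl (fun b _ => h b),
      Finset.sum_ite_eq' Finset.univ M.root
        (fun b => (joinNet N M).pathCount (some (Sum.inr b)) (some (Sum.inr y)))]
    simp
  rw [e2, join_pc_inr]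

lemma join_hybrid (hN : N.indeg N.root = 0) (hM : M.indeg M.root = 0) :
    (joinNet N M).hybridNumber = N.hybridNumber + M.hybridNumber := by
  show (∑ v : Option (N.V ⊕ M.V), ((joinNet N M).indeg v - 1)) = _
  rw [Fintype.sum_option, Fintype.sum_sum_type, join_indeg_none]
  have e1 : ∀ x : N.V, (joinNet N M).indeg (some (Sum.inl x)) - 1 = N.indeg x - 1 := by
    intro x
    rw [join_indeg_inl]
    by_cases hx : x = N.root
    · rw [if_pos hx, hx, hN]
    · rw [if_neg hx, zero_add]
  have e2 : ∀ y : M.V, (joinNet N M).indeg (some (Sum.inr y)) - 1 = M.indeg y - 1 := by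
    intro y
    rw [join_indeg_inr]
    by_cases hy : y = M.root
    · rw [if_pos hy, hy, hM]
    · rw [if_neg hy, zero_add]
  rw [Finset.sum_congr rfl (fun x _ => e1 x), Finset.sum_congr rfl (fun y _ => e2 y)]
  show 0 - 1 + (N.hybridNumber + M.hybridNumber) = _
  omega

lemma join_Pre {j1 j2 : ℕ} {μ : Fin j1 → ℕ} {ν : Fin j2 → ℕ}
    (hN : Pre N μ) (hM : Pre M ν) :
    Pre (joinNet N M) (fun i : Fin (j1 + j2) =>
      if h : i.val < j1 then μ ⟨i.val, h⟩
      else ν ⟨i.val - j1, by have := i.isLt; omega⟩) := by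
  obtain ⟨hNr, hNo, hNc, x1, hx1i, hx1l, hx1p⟩ := hN
  obtain ⟨hMr, hMo, hMc, x2, hx2i, hx2l, hx2p⟩ := hM
  refine ⟨join_indeg_none N M, Or.inr (join_outdeg_none N M), ?_, ?_⟩
  · rintro (_ | x | y) hv
    · exact absurd rfl hv
    · rw [join_indeg_inl, join_outdeg_inl]
      by_cases hx : x = N.root
      · rw [if_pos hx, hx, hNr]
        rcases hNo with h | h
        · left; exact ⟨rfl, h⟩
        · right; left; exact ⟨rfl, h⟩
      · rw [if_neg hx, zero_add]
        exact hNc x hx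
    · rw [join_indeg_inr, join_outdeg_inr]
      by_cases hy : y = M.root
      · rw [if_pos hy, hy, hMr]
        rcases hMo with h | h
        · left; exact ⟨rfl, h⟩
        · right; left; exact ⟨rfl, h⟩
      · rw [if_neg hy, zero_add]
        exact hMc y hy
  · refine ⟨fun i => if h : i.val < j1 then some (Sum.inl (x1 ⟨i.val, h⟩))
      else some (Sum.inr (x2 ⟨i.val - j1, by have := i.isLt; omega⟩)), ?_, ?_, ?_⟩
    · intro a b hab
      dsimp only at hab
      by_cases ha : a.val < j1 <;> by_cases hb : b.val < j1
      · rw [dif_pos ha, dif_pos hb] at hab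
        have h1 := Sum.inl.inj (Option.some.inj hab)
        have h2 := hx1i h1
        have h3 := congrArg Fin.val h2
        exact Fin.ext h3
      · rw [dif_pos ha, dif_neg hb] at hab
        exact absurd (Option.some.inj hab) (by simp)
      · rw [dif_neg ha, dif_pos hb] at hab
        exact absurd (Option.some.inj hab) (by simp)
      · rw [dif_neg ha, dif_neg hb] at hab
        have h1 := Sum.inr.inj (Option.some.inj hab)
        have h2 := hx2i h1
        have h3 := congrArg Fin.val h2
        have h4 : a.val - j1 = b.val - j1 := h3
        exact Fin.ext (by omega)
    · rintro (_ | x | y)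
      · rw [join_outdeg_none]
        constructor
        · intro h; omega
        · rintro ⟨i, hi⟩
          dsimp only at hi
          by_cases h : i.val < j1
          · rw [dif_pos h] at hi; cases hi
          · rw [dif_neg h] at hi; cases hi
      · rw [join_outdeg_inl]
        rw [hx1l x]
        constructor
        · rintro ⟨i1, hi1⟩
          refine ⟨⟨i1.val, by have := i1.isLt; omega⟩, ?_⟩
          dsimp only
          rw [dif_pos (show i1.val < j1 from i1.isLt)]
          have he : (⟨i1.val, i1.isLt⟩ : Fin j1) = i1 := Fin.ext rfl
          rw [he, hi1]
        · rintro ⟨i, hi⟩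
          dsimp only at hi
          by_cases h : i.val < j1
          · rw [dif_pos h] at hi
            exact ⟨⟨i.val, h⟩, Sum.inl.inj (Option.some.inj hi)⟩
          · rw [dif_neg h] at hi
            exact absurd (Option.some.inj hi) (by simp)
      · rw [join_outdeg_inr]
        rw [hx2l y]
        constructor
        · rintro ⟨i2, hi2⟩
          refine ⟨⟨j1 + i2.val, by have := i2.isLt; omega⟩, ?_⟩
          dsimp only
          rw [dif_neg (show ¬(j1 + i2.val < j1) by omega)]
          have he : (⟨j1 + i2.val - j1, by have := i2.isLt; omega⟩ : Fin j2) = i2 :=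
            Fin.ext (show j1 + i2.val - j1 = i2.val by omega)
          rw [he, hi2]
        · rintro ⟨i, hi⟩
          dsimp only at hi
          by_cases h : i.val < j1
          · rw [dif_pos h] at hi
            exact absurd (Option.some.inj hi) (by simp)
          · rw [dif_neg h] at hi
            exact ⟨⟨i.val - j1, by have := i.isLt; omega⟩, Sum.inr.inj (Option.some.inj hi)⟩
    · intro i
      dsimp only
      by_cases h : i.val < j1
      · rw [dif_pos h, dif_pos h]
        show (joinNet N M).pathCount none (some (Sum.inl (x1 ⟨i.val, h⟩))) = _
        rw [join_pc_root_inl, hx1p]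
      · rw [dif_neg h, dif_neg h]
        show (joinNet N M).pathCount none
          (some (Sum.inr (x2 ⟨i.val - j1, by have := i.isLt; omega⟩))) = _
        rw [join_pc_root_inr, hx2p]

end Gadget
end Aux7

section Aux8
set_option linter.unusedSectionVars false
namespace Gadget

lemma assemble : ∀ (n : ℕ), 1 ≤ n → ∀ (m : Fin n → ℕ), (∀ i, 1 ≤ m i) →
    ∃ N : PhyloNet, Pre N m ∧
      (N.hybridNumber ≤ ∑ k, (Nat.log 2 (m k) + (Nat.digits 2 (m k)).sum - 1)) ∧
      (∀ i0 : Fin n, (2 ≤ n ∨ 2 ≤ m i0) → N.outdeg N.root = 2) := by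
  intro n
  induction n with
  | zero => intro h; exact absurd h (by omega)
  | succ n ih =>
      intro _ m hm
      by_cases hn : n = 0
      · subst hn
        obtain ⟨N, hpre, hhyb, hroot⟩ := gadget_exists (m ⟨0, by omega⟩) (hm _)
        refine ⟨N, ?_, ?_, ?_⟩
        · have he : (fun _ : Fin 1 => m ⟨0, by omega⟩) = m :=
            funext fun i => congrArg m (Subsingleton.elim _ i)
          rwa [he] at hpre
        · rw [Fin.sum_univ_one, hhyb]
          exact le_of_eq (congrArg (fun t => Nat.log 2 t + (Nat.digits 2 t).sum - 1)
            (congrArg m (Fin.ext rfl)))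
        · intro i0 h
          rcases h with h | h
          · omega
          · apply hroot
            have he : i0 = ⟨0, by omega⟩ :=
              Fin.ext (by have := i0.isLt; simp only [Fin.val_mk]; omega)
            rwa [he] at h
      · have hn1 : 1 ≤ n := by omega
        set μ : Fin n → ℕ := fun i => m ⟨i.val, by have := i.isLt; omega⟩ with hμ
        obtain ⟨N, hNpre, hNhyb, _⟩ := ih hn1 μ (fun i => hm _)
        obtain ⟨M, hMpre, hMhyb, hMroot⟩ := gadget_exists (m ⟨n, by omega⟩) (hm _)
        refine ⟨joinNet N M, ?_, ?_, fun _ _ => join_outdeg_none N M⟩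
        · have hj := join_Pre N M hNpre hMpre
          have he : (fun i : Fin (n + 1) =>
              if h : i.val < n then μ ⟨i.val, h⟩
              else (fun _ : Fin 1 => m ⟨n, by omega⟩) ⟨i.val - n, by have := i.isLt; omega⟩)
              = m := by
            funext i
            by_cases h : i.val < n
            · rw [dif_pos h]
            · rw [dif_neg h]
              exact congrArg m (Fin.ext (by have := i.isLt; simp only [Fin.val_mk]; omega))
          rwa [he] at hj
        · rw [join_hybrid N M hNpre.1 hMpre.1, Fin.sum_univ_castSucc]
          apply Nat.add_le_add
          · refine le_trans hNhyb (le_of_eq (Finset.sum_congr rfl fun k _ => ?_))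
            have : μ k = m (Fin.castSucc k) := congrArg m (Fin.ext rfl)
            rw [this]
          · rw [hMhyb]
            have : m ⟨n, by omega⟩ = m (Fin.last n) := congrArg m (Fin.ext rfl)
            rw [this]

lemma impossible (N : PhyloNet) (hp : N.IsPhylo) (m : Fin 1 → ℕ)
    (hm : m ⟨0, Nat.one_pos⟩ = 1) (hr : N.Realizes m) : False := by
  obtain ⟨x, hxi, hxl, hxp⟩ := hr
  set l := x ⟨0, Nat.one_pos⟩ with hl
  set K := (Finset.univ.sup N.rank) + 1 with hK
  have hrank : ∀ w : N.V, N.rank w < K := fun w =>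
    Nat.lt_succ_of_le (Finset.le_sup (Finset.mem_univ w))
  have H : ∀ k : ℕ, ∀ v : N.V, K - N.rank v ≤ k → 1 ≤ N.pathCount v l := by
    intro k
    induction k with
    | zero =>
        intro v hv
        have := hrank v
        omega
    | succ k ih =>
        intro v hv
        by_cases hvl : v = l
        · subst hvl
          rw [N.pathCount_self']
        · have hvout : 0 < N.outdeg v := by
            rcases eq_or_ne v N.root with hroot | hroot
            · rw [hroot, hp.2.1]
              omega
            · rcases hp.2.2 v hroot with h1 | h2 | h3
              · exfalso
                obtain ⟨i, hi⟩ := (hxl v).mp ⟨h1.1, h1.2⟩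
                apply hvl
                rw [← hi, hl]
                exact congrArg x (Subsingleton.elim _ _)
              · rw [h2.2]; omega
              · rw [h3.2]; omega
          obtain ⟨u, hu⟩ : ∃ u : N.V, 0 < N.arcs v u := by
            by_contra hc
            push_neg at hc
            have : N.outdeg v = 0 := Finset.sum_eq_zero fun u _ => by
              have := hc u
              omega
            omega
          rw [N.pathCount_cons' hvl]
          have h1 : 1 ≤ N.arcs v u * N.pathCount u l := by
            have h2 : 1 ≤ N.pathCount u l := by
              apply ih u
              have := N.rank_lt v u hu
              have := hrank u
              omega
            exact Nat.one_le_iff_ne_zero.mpr (by positivity)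
          calc 1 ≤ N.arcs v u * N.pathCount u l := h1
            _ ≤ ∑ w : N.V, N.arcs v w * N.pathCount w l :=
              Finset.single_le_sum (f := fun w => N.arcs v w * N.pathCount w l)
                (fun w _ => Nat.zero_le _) (Finset.mem_univ u)
  have hroot_ne : N.root ≠ l := by
    intro h
    have hleaf : N.IsLeaf l := (hxl l).mpr ⟨⟨0, Nat.one_pos⟩, rfl⟩
    rw [← h] at hleaf
    have h1 := hleaf.1
    have h2 := hp.1
    omega
  have hcount := hxp ⟨0, Nat.one_pos⟩
  rw [hm] at hcount
  rw [N.pathCount_cons' hroot_ne] at hcount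
  have h2 : 2 ≤ ∑ w : N.V, N.arcs N.root w * N.pathCount w l := by
    have e1 : (2 : ℕ) = ∑ w : N.V, N.arcs N.root w := hp.2.1.symm
    rw [e1]
    apply Finset.sum_le_sum
    intro w _
    by_cases hw : 0 < N.arcs N.root w
    · have := H (K - N.rank w) w le_rfl
      exact Nat.le_mul_of_pos_right _ this
    · have : N.arcs N.root w = 0 := by omega
      rw [this]
      omega
  omega

end Gadget
end Aux8

/-- the hybrid number of a ploidy profile `m⃗ = (m₁,…,mₙ)` (the minimum of
`∑_{v hybrid} (indeg v − 1)` over all phylogenetic networks realizing `m⃗`) satisfies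
`h(m⃗) ≤ ∑ₖ (⌊log₂ mₖ⌋ + s₂(mₖ) − 1)`; terms with `mₖ = 1` contribute `0`. -/
theorem stmt8 (n : ℕ) (hn : 1 ≤ n) (m : Fin n → ℕ) (hm : ∀ i, 1 ≤ m i)
    (hdesc : Antitone m) :
    PhyloNet.profileHybridNumber m ≤
      ∑ k, (Nat.log 2 (m k) + (Nat.digits 2 (m k)).sum - 1) := by
  have hn0 : 0 < n := hn
  by_cases hbad : n = 1 ∧ m ⟨0, hn0⟩ = 1
  · have hempty : {h : ℕ | ∃ N : PhyloNet, N.IsPhylo ∧ N.Realizes m ∧ N.hybridNumber = h}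
        = ∅ := by
      ext h
      simp only [Set.mem_setOf_eq, Set.mem_empty_iff_false, iff_false, not_exists]
      rintro N ⟨hp, hr, _⟩
      obtain ⟨h1, h0⟩ := hbad
      subst h1
      exact Gadget.impossible N hp m h0 hr
    rw [PhyloNet.profileHybridNumber, hempty, Nat.sInf_empty]
    exact Nat.zero_le _
  · have hcond : 2 ≤ n ∨ 2 ≤ m ⟨0, hn0⟩ := by
      by_cases h2 : 2 ≤ n
      · exact Or.inl h2
      · have h1 : n = 1 := by omega
        have h3 : m ⟨0, hn0⟩ ≠ 1 := fun he => hbad ⟨h1, he⟩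
        have h4 : 1 ≤ m ⟨0, hn0⟩ := hm _
        right
        omega
    obtain ⟨N, hpre, hhyb, hroot⟩ := Gadget.assemble n hn m hm
    have hout : N.outdeg N.root = 2 := hroot ⟨0, hn0⟩ hcond
    obtain ⟨x, hxi, hxl, hxp⟩ := hpre.2.2.2
    have hphylo : N.IsPhylo := ⟨hpre.1, hout, hpre.2.2.1⟩
    have hreal : N.Realizes m := by
      refine ⟨x, hxi, ?_, hxp⟩
      intro v
      rw [← hxl v]
      constructor
      · exact fun h => h.2
      · intro h
        have hvr : v ≠ N.root := by
          intro e
          rw [e, hout] at h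
          exact absurd h (by omega)
        rcases hpre.2.2.1 v hvr with h1 | h2 | h3
        · exact ⟨h1.1, h⟩
        · exfalso
          have := h2.2
          omega
        · exfalso
          have := h3.2
          omega
    calc PhyloNet.profileHybridNumber m ≤ N.hybridNumber :=
          Nat.sInf_le ⟨N, hphylo, hreal, rfl⟩
      _ ≤ _ := hhyb
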